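/- Fix μ ∈ ℝ and σ, σ_A, γ > 0, and define V(d) = min( d², inf_{σ_U ∈ (0,∞)} [ σ_U²(σ_A⁴ + σ_U²·d²)/(σ_A² + σ_U²)² + (γ/2)·ln((σ² + σ_U²)/σ_U²) ] ) for d ≥ 0. Define the expected population utility loss PL(μ_A) = ∫ V(|μ_A − θ|) dN(μ, σ²)(θ). Then PL is uniquely minimized at μ_A = μ: for every μ_A ≠ μ, PL(μ_A) > PL(μ). That is, any directional bias of the AI prior mean strictly increases the population's expected utility loss. -/

import Mathlib

open MeasureTheory ProbabilityTheory Filter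
open scoped ENNReal NNReal

noncomputable def Ffun (σ σA γ : ℝ) (u s : ℝ) : ℝ :=
  u ^ 2 * (σA ^ 4 + u ^ 2 * s) / (σA ^ 2 + u ^ 2) ^ 2
    + γ / 2 * Real.log ((σ ^ 2 + u ^ 2) / u ^ 2)

noncomputable def hfun (σ σA γ : ℝ) (s : ℝ) : ℝ :=
  ⨅ u : Set.Ioi (0 : ℝ), Ffun σ σA γ u s

lemma Ffun_decomp (σ σA γ u s : ℝ) :
    Ffun σ σA γ u s = (u ^ 2 * σA ^ 4 / (σA ^ 2 + u ^ 2) ^ 2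
        + γ / 2 * Real.log ((σ ^ 2 + u ^ 2) / u ^ 2))
      + u ^ 4 / (σA ^ 2 + u ^ 2) ^ 2 * s := by
  rw [Ffun, show u ^ 2 * (σA ^ 4 + u ^ 2 * s) = u ^ 2 * σA ^ 4 + u ^ 4 * s by ring,
    add_div, div_mul_eq_mul_div]
  ring

lemma log_term_nonneg {σ u : ℝ} (hu : 0 < u) :
    0 ≤ Real.log ((σ ^ 2 + u ^ 2) / u ^ 2) := by
  apply Real.log_nonneg
  rw [le_div_iff₀ (by positivity)]
  nlinarith [sq_nonneg σ]

lemma Ffun_ge {σ σA γ : ℝ} (hA : 0 < σA) (hγ : 0 < γ) {u : ℝ} (hu : 0 < u) (s : ℝ) :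
    min s 0 ≤ Ffun σ σA γ u s := by
  have hd : (0:ℝ) < σA ^ 2 + u ^ 2 := by positivity
  have hlog := log_term_nonneg (σ := σ) hu
  have ha1 : u ^ 4 / (σA ^ 2 + u ^ 2) ^ 2 ≤ 1 := by
    rw [div_le_one (by positivity)]
    nlinarith [sq_nonneg σA, sq_nonneg u, sq_nonneg (σA^2)]
  have ha0 : 0 ≤ u ^ 4 / (σA ^ 2 + u ^ 2) ^ 2 := by positivity
  rw [Ffun_decomp]
  have h1 : (0:ℝ) ≤ u ^ 2 * σA ^ 4 / (σA ^ 2 + u ^ 2) ^ 2 := by positivity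
  have h2 : min s 0 ≤ u ^ 4 / (σA ^ 2 + u ^ 2) ^ 2 * s := by
    rcases le_or_gt 0 s with hs | hs
    · calc min s 0 ≤ 0 := min_le_right _ _
        _ ≤ _ := by positivity
    · calc min s 0 ≤ s := min_le_left _ _
        _ ≤ _ := by nlinarith
  nlinarith [mul_nonneg (le_of_lt (half_pos hγ)) hlog]

lemma hfun_bddBelow {σ σA γ : ℝ} (hA : 0 < σA) (hγ : 0 < γ) (s : ℝ) :
    BddBelow (Set.range fun u : Set.Ioi (0:ℝ) => Ffun σ σA γ u s) := by
  refine ⟨min s 0, ?_⟩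
  rintro x ⟨u, rfl⟩
  exact Ffun_ge hA hγ u.2 s

lemma hfun_le_Ffun {σ σA γ : ℝ} (hA : 0 < σA) (hγ : 0 < γ) {u : ℝ} (hu : 0 < u) (s : ℝ) :
    hfun σ σA γ s ≤ Ffun σ σA γ u s :=
  ciInf_le (hfun_bddBelow hA hγ s) ⟨u, hu⟩

lemma hfun_mono {σ σA γ : ℝ} (hA : 0 < σA) (hγ : 0 < γ) : Monotone (hfun σ σA γ) := by
  intro s₁ s₂ hs
  apply ciInf_mono (hfun_bddBelow hA hγ s₁)
  rintro ⟨u, hu⟩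
  rw [Ffun_decomp, Ffun_decomp]
  have : (0:ℝ) ≤ (u:ℝ) ^ 4 / (σA ^ 2 + (u:ℝ) ^ 2) ^ 2 := by positivity
  nlinarith

lemma hfun_nonneg {σ σA γ : ℝ} (hA : 0 < σA) (hγ : 0 < γ) {s : ℝ} (hs : 0 ≤ s) :
    0 ≤ hfun σ σA γ s := by
  apply le_ciInf
  rintro ⟨u, hu⟩
  have := Ffun_ge (σ := σ) hA hγ hu s
  rw [min_eq_right hs] at this
  linarith [this]

lemma tendsto_Ffun (σ : ℝ) {σA : ℝ} (γ : ℝ) (hA : 0 < σA) (s : ℝ) :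
    Tendsto (fun u => Ffun σ σA γ u s) atTop (nhds s) := by
  have hpow : Tendsto (fun u : ℝ => u ^ 2) atTop atTop := tendsto_pow_atTop two_ne_zero
  have hd : Tendsto (fun u : ℝ => σA ^ 2 + u ^ 2) atTop atTop :=
    tendsto_atTop_add_const_left _ _ hpow
  have hinv : Tendsto (fun u : ℝ => (σA ^ 2 + u ^ 2)⁻¹) atTop (nhds 0) :=
    hd.inv_tendsto_atTop
  have hne : ∀ u : ℝ, σA ^ 2 + u ^ 2 ≠ 0 := fun u => by positivity
  have hfrac : Tendsto (fun u : ℝ => u ^ 2 / (σA ^ 2 + u ^ 2)) atTop (nhds 1) := by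
    have : Tendsto (fun u : ℝ => 1 - σA ^ 2 * (σA ^ 2 + u ^ 2)⁻¹) atTop (nhds (1 - σA ^ 2 * 0)) :=
      tendsto_const_nhds.sub (hinv.const_mul _)
    rw [mul_zero, sub_zero] at this
    refine this.congr fun u => ?_
    field_simp
    ring
  have h1 : Tendsto (fun u : ℝ => (u ^ 2 / (σA ^ 2 + u ^ 2)) * (σA ^ 4 * (σA ^ 2 + u ^ 2)⁻¹))
      atTop (nhds (1 * (σA ^ 4 * 0))) := hfrac.mul ((hinv.const_mul _))
  rw [mul_zero, mul_zero] at h1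
  have h2 : Tendsto (fun u : ℝ => (u ^ 2 / (σA ^ 2 + u ^ 2)) ^ 2 * s) atTop (nhds (1 ^ 2 * s)) :=
    (hfrac.pow 2).mul_const s
  rw [one_pow, one_mul] at h2
  have hinv2 : Tendsto (fun u : ℝ => (u ^ 2)⁻¹) atTop (nhds 0) := hpow.inv_tendsto_atTop
  have harg : Tendsto (fun u : ℝ => 1 + σ ^ 2 * (u ^ 2)⁻¹) atTop (nhds (1 + σ ^ 2 * 0)) :=
    tendsto_const_nhds.add (hinv2.const_mul _)
  rw [mul_zero, add_zero] at harg
  have h3 : Tendsto (fun u : ℝ => γ / 2 * Real.log (1 + σ ^ 2 * (u ^ 2)⁻¹)) atTop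
      (nhds (γ / 2 * Real.log 1)) :=
    (((Real.continuousAt_log one_ne_zero).tendsto.comp harg).const_mul _)
  rw [Real.log_one, mul_zero] at h3
  have hsum : Tendsto (fun u : ℝ =>
      (u ^ 2 / (σA ^ 2 + u ^ 2)) * (σA ^ 4 * (σA ^ 2 + u ^ 2)⁻¹)
        + (u ^ 2 / (σA ^ 2 + u ^ 2)) ^ 2 * s
        + γ / 2 * Real.log (1 + σ ^ 2 * (u ^ 2)⁻¹)) atTop (nhds (0 + s + 0)) :=
    (h1.add h2).add h3
  rw [zero_add, add_zero] at hsum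
  refine hsum.congr' ?_
  filter_upwards [eventually_gt_atTop (0:ℝ)] with u hu
  have hu2 : u ^ 2 ≠ 0 := by positivity
  rw [Ffun]
  have harg' : 1 + σ ^ 2 * (u ^ 2)⁻¹ = (σ ^ 2 + u ^ 2) / u ^ 2 := by field_simp; ring
  rw [harg']
  congr 1
  field_simp

lemma hfun_le_self {σ σA γ : ℝ} (hA : 0 < σA) (hγ : 0 < γ) {s : ℝ} (hs : 0 ≤ s) :
    hfun σ σA γ s ≤ s := by
  refine ge_of_tendsto (tendsto_Ffun σ γ hA s) ?_
  filter_upwards [eventually_gt_atTop (0:ℝ)] with u hu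
  exact hfun_le_Ffun hA hγ hu s

set_option maxHeartbeats 1000000 in
lemma hfun_strict {σ σA γ : ℝ} (hσ : 0 < σ) (hA : 0 < σA) (hγ : 0 < γ)
    {s₁ s₂ : ℝ} (h0 : 0 ≤ s₁) (h12 : s₁ < s₂) :
    hfun σ σA γ s₁ < hfun σ σA γ s₂ := by
  set K : ℝ := (s₂ + 1) / γ with hK
  set u₀ : ℝ := σ * Real.exp (-K) with hu₀
  have hu₀pos : 0 < u₀ := by positivity
  set a₀ : ℝ := u₀ ^ 4 / (σA ^ 2 + u₀ ^ 2) ^ 2 with ha₀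
  have ha₀pos : 0 < a₀ := by positivity
  have ha₀le : a₀ ≤ 1 := by
    rw [ha₀, div_le_one (by positivity)]
    nlinarith [sq_nonneg σA, sq_nonneg u₀, sq_nonneg (σA ^ 2)]
  have hexp : σ ^ 2 / u₀ ^ 2 = Real.exp (2 * K) := by
    have e1 : Real.exp (-K) ^ 2 = Real.exp (-(2 * K)) := by
      rw [sq, ← Real.exp_add]; congr 1; ring
    rw [hu₀, mul_pow, e1, Real.exp_neg]
    rw [eq_comm, eq_div_iff (by positivity)]
    field_simp
  have hγK : γ * K = s₂ + 1 := by
    rw [hK]; field_simp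
  have hs₂0 : 0 ≤ s₂ := le_trans h0 h12.le
  -- lower bound on Ffun for every u > 0
  have key : ∀ u : ℝ, 0 < u →
      hfun σ σA γ s₁ + a₀ * (s₂ - s₁) ≤ Ffun σ σA γ u s₂ := by
    intro u hu
    rcases le_or_gt u₀ u with hcase | hcase
    · -- u ≥ u₀ : use monotonicity of a
      have hau : a₀ ≤ u ^ 4 / (σA ^ 2 + u ^ 2) ^ 2 := by
        rw [ha₀, div_le_div_iff₀ (by positivity) (by positivity)]
        have hsq : u₀ ^ 2 ≤ u ^ 2 := by nlinarith
        have hstep : u₀ ^ 2 * (σA ^ 2 + u ^ 2) ≤ u ^ 2 * (σA ^ 2 + u₀ ^ 2) := by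
          nlinarith [mul_le_mul_of_nonneg_left hsq (sq_nonneg σA)]
        have h2 : (u₀ ^ 2 * (σA ^ 2 + u ^ 2)) ^ 2 ≤ (u ^ 2 * (σA ^ 2 + u₀ ^ 2)) ^ 2 := by
          apply sq_le_sq' <;> nlinarith [sq_nonneg u₀, sq_nonneg u, sq_nonneg σA]
        nlinarith [h2]
      have hF1 : hfun σ σA γ s₁ ≤ Ffun σ σA γ u s₁ := hfun_le_Ffun hA hγ hu s₁
      rw [Ffun_decomp σ σA γ u s₂]
      rw [Ffun_decomp σ σA γ u s₁] at hF1
      nlinarith [hau, h12]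
    · -- u < u₀ : the log term is big
      have hlog_big : Real.exp (2 * K) ≤ (σ ^ 2 + u ^ 2) / u ^ 2 := by
        rw [← hexp]
        have h1 : σ ^ 2 / u₀ ^ 2 ≤ σ ^ 2 / u ^ 2 := by
          apply div_le_div_of_nonneg_left (by positivity) (by positivity)
          nlinarith
        have h2 : σ ^ 2 / u ^ 2 ≤ (σ ^ 2 + u ^ 2) / u ^ 2 := by
          apply div_le_div_of_nonneg_right ?_ (by positivity)
          nlinarith
        linarith
      have hlog : 2 * K ≤ Real.log ((σ ^ 2 + u ^ 2) / u ^ 2) := by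
        calc 2 * K = Real.log (Real.exp (2 * K)) := (Real.log_exp _).symm
          _ ≤ _ := Real.log_le_log (Real.exp_pos _) hlog_big
      have hfirst : 0 ≤ u ^ 2 * (σA ^ 4 + u ^ 2 * s₂) / (σA ^ 2 + u ^ 2) ^ 2 := by positivity
      have hbig : s₂ + 1 ≤ Ffun σ σA γ u s₂ := by
        rw [Ffun]
        have : γ / 2 * (2 * K) ≤ γ / 2 * Real.log ((σ ^ 2 + u ^ 2) / u ^ 2) :=
          mul_le_mul_of_nonneg_left hlog (by positivity)
        nlinarith [hγK]
      have hT : hfun σ σA γ s₁ + a₀ * (s₂ - s₁) ≤ s₂ := by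
        have := hfun_le_self (σ := σ) hA hγ h0
        nlinarith
      linarith
  have : hfun σ σA γ s₁ + a₀ * (s₂ - s₁) ≤ hfun σ σA γ s₂ := by
    apply le_ciInf
    rintro ⟨u, hu⟩
    exact key u hu
  nlinarith
noncomputable def Eg (σ x : ℝ) : ℝ := Real.exp (-x ^ 2 / (2 * σ ^ 2))

lemma Eg_pos (σ x : ℝ) : 0 < Eg σ x := Real.exp_pos _

lemma Eg_anti {σ : ℝ} (hσ : 0 < σ) {x y : ℝ} (hxy : |x| ≤ |y|) : Eg σ y ≤ Eg σ x := by
  apply Real.exp_le_exp.2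
  have h2 : x ^ 2 ≤ y ^ 2 := by
    rw [← sq_abs x, ← sq_abs y]
    exact pow_le_pow_left₀ (abs_nonneg x) hxy 2
  rw [div_le_div_iff₀ (by positivity) (by positivity)]
  nlinarith

lemma Eg_lt_one {σ t : ℝ} (hσ : 0 < σ) (ht : t ≠ 0) : Eg σ t < 1 := by
  rw [Eg, ← Real.exp_zero]
  apply Real.exp_lt_exp.2
  have : 0 < t ^ 2 := by positivity
  have : 0 < 2 * σ ^ 2 := by positivity
  rw [div_lt_iff₀ (by positivity)]
  nlinarith

lemma Eg_add_sub {σ : ℝ} (hσ : 0 < σ) (x t : ℝ) :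
    Eg σ (x - t) + Eg σ (x + t)
      = 2 * (Eg σ x * Eg σ t * Real.cosh (x * t / σ ^ 2)) := by
  have hσ2 : (σ:ℝ) ^ 2 ≠ 0 := by positivity
  have e1 : -(x - t) ^ 2 / (2 * σ ^ 2)
      = -x ^ 2 / (2 * σ ^ 2) + -t ^ 2 / (2 * σ ^ 2) + x * t / σ ^ 2 := by
    field_simp; ring
  have e2 : -(x + t) ^ 2 / (2 * σ ^ 2)
      = -x ^ 2 / (2 * σ ^ 2) + -t ^ 2 / (2 * σ ^ 2) + -(x * t / σ ^ 2) := by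
    field_simp; ring
  rw [Eg, Eg, Eg, Eg, e1, e2, Real.cosh_eq, Real.exp_add, Real.exp_add,
    Real.exp_add, Real.exp_add]
  ring

lemma crossing {σ : ℝ} (hσ : 0 < σ) {t : ℝ} (ht : t ≠ 0) :
    ∃ x₀ : ℝ, 0 < x₀ ∧ Real.cosh (x₀ * t / σ ^ 2) * Eg σ t = 1 := by
  set k : ℝ → ℝ := fun x => Real.cosh (x * t / σ ^ 2) * Eg σ t with hk
  have hcont : Continuous k := by
    apply Continuous.mul ?_ continuous_const
    exact Real.continuous_cosh.comp (by continuity)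
  have hk0 : k 0 < 1 := by
    simp only [hk, zero_mul, zero_div, Real.cosh_zero, one_mul]
    exact Eg_lt_one hσ ht
  set M : ℝ := σ ^ 2 / |t| * (t ^ 2 / (2 * σ ^ 2) + 1) with hM
  have htpos : 0 < |t| := abs_pos.2 ht
  have hMpos : 0 < M := by
    apply mul_pos (by positivity)
    positivity
  have hargM : |M * t / σ ^ 2| = t ^ 2 / (2 * σ ^ 2) + 1 := by
    rw [abs_div, abs_mul, abs_of_pos hMpos, abs_of_pos (show (0:ℝ) < σ ^ 2 by positivity)]
    rw [hM]
    field_simp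
  have hkM : 1 < k M := by
    have h1 : Real.exp (t ^ 2 / (2 * σ ^ 2) + 1) / 2 ≤ Real.cosh (M * t / σ ^ 2) := by
      rw [← Real.cosh_abs, hargM, Real.cosh_eq]
      have := Real.exp_pos (-(t ^ 2 / (2 * σ ^ 2) + 1))
      linarith
    have h2 : Real.exp (t ^ 2 / (2 * σ ^ 2)) < Real.exp (t ^ 2 / (2 * σ ^ 2) + 1) / 2 := by
      rw [Real.exp_add]
      have he : (2:ℝ) < Real.exp 1 := by
        have := Real.exp_one_gt_d9
        linarith
      have := Real.exp_pos (t ^ 2 / (2 * σ ^ 2))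
      nlinarith
    have h3 : Real.exp (t ^ 2 / (2 * σ ^ 2)) * Eg σ t = 1 := by
      rw [Eg, ← Real.exp_add]
      rw [show t ^ 2 / (2 * σ ^ 2) + -t ^ 2 / (2 * σ ^ 2) = 0 by ring, Real.exp_zero]
    have hEt : 0 < Eg σ t := Eg_pos σ t
    calc 1 = Real.exp (t ^ 2 / (2 * σ ^ 2)) * Eg σ t := h3.symm
      _ < Real.exp (t ^ 2 / (2 * σ ^ 2) + 1) / 2 * Eg σ t := by
          exact mul_lt_mul_of_pos_right h2 hEt
      _ ≤ Real.cosh (M * t / σ ^ 2) * Eg σ t := mul_le_mul_of_nonneg_right h1 hEt.le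
  have hsub : Set.Icc (k 0) (k M) ⊆ k '' Set.Icc 0 M :=
    intermediate_value_Icc hMpos.le hcont.continuousOn
  obtain ⟨x₀, hx₀mem, hx₀⟩ := hsub ⟨hk0.le, hkM.le⟩
  refine ⟨x₀, ?_, hx₀⟩
  rcases lt_or_eq_of_le hx₀mem.1 with h | h
  · exact h
  · exfalso; rw [← h] at hx₀; rw [hx₀] at hk0; exact lt_irrefl _ hk0

lemma Eg_exp_form (σ x : ℝ) : Eg σ x = Real.exp (-(2 * σ ^ 2)⁻¹ * x ^ 2) := by
  rw [Eg]; congr 1; ring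

lemma int_Eg {σ : ℝ} (hσ : 0 < σ) : Integrable (Eg σ) := by
  have h := integrable_exp_neg_mul_sq (show (0:ℝ) < (2 * σ ^ 2)⁻¹ by positivity)
  exact h.congr (Filter.Eventually.of_forall fun x => (Eg_exp_form σ x).symm)

lemma int_sq_Eg {σ : ℝ} (hσ : 0 < σ) : Integrable (fun x : ℝ => x ^ 2 * Eg σ x) := by
  have h := integrable_rpow_mul_exp_neg_mul_sq
    (show (0:ℝ) < (2 * σ ^ 2)⁻¹ by positivity) (show (-1:ℝ) < 2 by norm_num)
  refine h.congr (Filter.Eventually.of_forall fun x => ?_)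
  simp only [Eg_exp_form, Real.rpow_two]

lemma int_mul_Eg {σ : ℝ} (hσ : 0 < σ) : Integrable (fun x : ℝ => x * Eg σ x) := by
  have h := integrable_mul_exp_neg_mul_sq (show (0:ℝ) < (2 * σ ^ 2)⁻¹ by positivity)
  exact h.congr (Filter.Eventually.of_forall fun x => by simp only [Eg_exp_form])

lemma int_sq_Eg_shift {σ : ℝ} (hσ : 0 < σ) (c : ℝ) :
    Integrable (fun x : ℝ => x ^ 2 * Eg σ (x + c)) := by
  have base : Integrable (fun x : ℝ => (x - c) ^ 2 * Eg σ x) := by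
    have expand : (fun x : ℝ => (x - c) ^ 2 * Eg σ x)
        = fun x => (x ^ 2 * Eg σ x - (2 * c) * (x * Eg σ x)) + c ^ 2 * Eg σ x := by
      funext x; ring
    rw [expand]
    exact (((int_sq_Eg hσ).sub ((int_mul_Eg hσ).const_mul _)).add ((int_Eg hσ).const_mul _))
  have h := base.comp_add_right c
  refine h.congr (Filter.Eventually.of_forall fun x => ?_)
  simp only [add_sub_cancel_right]

lemma measurable_Wfun {σ σA γ : ℝ} (hA : 0 < σA) (hγ : 0 < γ) :
    Measurable (fun x : ℝ => hfun σ σA γ (x ^ 2)) :=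
  (hfun_mono hA hγ).measurable.comp ((continuous_pow 2).measurable)

lemma int_W_Eg_shift {σ σA γ : ℝ} (hσ : 0 < σ) (hA : 0 < σA) (hγ : 0 < γ) (c : ℝ) :
    Integrable (fun x : ℝ => hfun σ σA γ (x ^ 2) * Eg σ (x + c)) := by
  refine Integrable.mono' (int_sq_Eg_shift hσ c) ?_ ?_
  · exact ((measurable_Wfun hA hγ).mul
      ((Real.continuous_exp.comp (by continuity)).measurable)).aestronglyMeasurable
  · refine Filter.Eventually.of_forall fun x => ?_
    have h0 : 0 ≤ hfun σ σA γ (x ^ 2) := hfun_nonneg hA hγ (sq_nonneg x)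
    have h1 : hfun σ σA γ (x ^ 2) ≤ x ^ 2 := hfun_le_self hA hγ (sq_nonneg x)
    have hE : 0 < Eg σ (x + c) := Eg_pos _ _
    rw [Real.norm_eq_abs, abs_mul, abs_of_nonneg h0, abs_of_pos hE]
    exact mul_le_mul_of_nonneg_right h1 hE.le

lemma PL_repr {σ σA γ : ℝ} (hσ : 0 < σ) (hA : 0 < σA) (hγ : 0 < γ) (μ m : ℝ) :
    ∫ θ, hfun σ σA γ ((m - θ) ^ 2) ∂(gaussianReal μ (Real.toNNReal (σ ^ 2)))
      = (Real.sqrt (2 * Real.pi * σ ^ 2))⁻¹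
        * ∫ x, Eg σ x * hfun σ σA γ ((x - (m - μ)) ^ 2) := by
  set v : NNReal := Real.toNNReal (σ ^ 2) with hv
  have hvne : v ≠ 0 := by
    rw [hv, ← NNReal.coe_ne_zero, Real.coe_toNNReal _ (sq_nonneg σ)]
    positivity
  have hvcoe : (v : ℝ) = σ ^ 2 := Real.coe_toNNReal _ (sq_nonneg σ)
  rw [gaussianReal_of_var_ne_zero μ hvne]
  have hpdf : gaussianPDF μ v = fun x => ((fun y => (gaussianPDFReal μ v y).toNNReal) x : ℝ≥0∞) :=
    rfl
  rw [hpdf, integral_withDensity_eq_integral_smul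
    ((measurable_gaussianPDFReal μ v).real_toNNReal) _]
  have hcongr : ∀ θ : ℝ, (gaussianPDFReal μ v θ).toNNReal • hfun σ σA γ ((m - θ) ^ 2)
      = (Real.sqrt (2 * Real.pi * σ ^ 2))⁻¹
        * (Eg σ (θ - μ) * hfun σ σA γ ((m - θ) ^ 2)) := by
    intro θ
    rw [NNReal.smul_def, Real.coe_toNNReal _ (gaussianPDFReal_nonneg μ v θ), smul_eq_mul]
    rw [gaussianPDFReal, hvcoe, Eg]
    ring
  rw [integral_congr_ae (Filter.Eventually.of_forall hcongr), integral_const_mul]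
  congr 1
  have hshift : (∫ x, Eg σ (x + μ - μ) * hfun σ σA γ ((m - (x + μ)) ^ 2))
      = ∫ x, Eg σ (x - μ) * hfun σ σA γ ((m - x) ^ 2) :=
    integral_add_right_eq_self (fun x => Eg σ (x - μ) * hfun σ σA γ ((m - x) ^ 2)) μ
  rw [← hshift]
  refine integral_congr_ae (Filter.Eventually.of_forall fun x => ?_)
  simp only []
  have e1 : x + μ - μ = x := by ring
  have e2 : (m - (x + μ)) ^ 2 = (x - (m - μ)) ^ 2 := by ring
  rw [e1, e2]

lemma abs_arg_mono {σ : ℝ} (hσ : 0 < σ) {a b t : ℝ} (ha : 0 ≤ a) (hab : a ≤ b) :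
    |a * t / σ ^ 2| ≤ |b * t / σ ^ 2| := by
  rw [abs_div, abs_div, abs_mul, abs_mul, abs_of_nonneg ha, abs_of_nonneg (le_trans ha hab)]
  rw [div_le_div_iff₀ (by positivity) (by positivity)]
  exact mul_le_mul_of_nonneg_right (mul_le_mul_of_nonneg_right hab (abs_nonneg t)) (abs_nonneg _)

lemma abs_arg_strict {σ : ℝ} (hσ : 0 < σ) {a b t : ℝ} (ha : 0 ≤ a) (hab : a < b)
    (ht : t ≠ 0) : |a * t / σ ^ 2| < |b * t / σ ^ 2| := by
  rw [abs_div, abs_div, abs_mul, abs_mul, abs_of_nonneg ha, abs_of_nonneg (le_trans ha hab.le)]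
  rw [div_lt_div_iff₀ (by positivity) (by positivity)]
  have htpos : 0 < |t| := abs_pos.2 ht
  have hs : (0:ℝ) < |σ ^ 2| := abs_pos.2 (by positivity)
  exact mul_lt_mul_of_pos_right (mul_lt_mul_of_pos_right hab htpos) hs

set_option maxHeartbeats 1000000 in
lemma key_ineq {σ σA γ : ℝ} (hσ : 0 < σ) (hA : 0 < σA) (hγ : 0 < γ) {t : ℝ} (ht : t ≠ 0) :
    (∫ x : ℝ, Eg σ x * hfun σ σA γ (x ^ 2))
      < ∫ x : ℝ, Eg σ x * hfun σ σA γ ((x - t) ^ 2) := by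
  obtain ⟨x₀, hx₀pos, hx₀⟩ := crossing hσ ht
  -- integrability
  have I0 : Integrable (fun x : ℝ => Eg σ x * hfun σ σA γ (x ^ 2)) := by
    refine (int_W_Eg_shift hσ hA hγ 0).congr (Filter.Eventually.of_forall fun x => ?_)
    simp only [add_zero]; rw [mul_comm]
  have Ip : Integrable (fun x : ℝ => Eg σ (x + t) * hfun σ σA γ (x ^ 2)) := by
    refine (int_W_Eg_shift hσ hA hγ t).congr (Filter.Eventually.of_forall fun x => ?_)
    simp only []; rw [mul_comm]
  have Im : Integrable (fun x : ℝ => Eg σ (x - t) * hfun σ σA γ (x ^ 2)) := by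
    refine (int_W_Eg_shift hσ hA hγ (-t)).congr (Filter.Eventually.of_forall fun x => ?_)
    simp only []; rw [mul_comm, sub_eq_add_neg]
  have IE : Integrable (Eg σ) := int_Eg hσ
  have IEp : Integrable (fun x : ℝ => Eg σ (x + t)) := IE.comp_add_right t
  have IEm : Integrable (fun x : ℝ => Eg σ (x - t)) := IE.comp_sub_right t
  -- the density difference Ψ
  set Ψ : ℝ → ℝ := fun x => Eg σ x * (Real.cosh (x * t / σ ^ 2) * Eg σ t - 1) with hΨ
  have hΨeq : ∀ x, Ψ x = (Eg σ (x - t) + Eg σ (x + t)) / 2 - Eg σ x := by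
    intro x
    have h := Eg_add_sub hσ x t
    show Eg σ x * (Real.cosh (x * t / σ ^ 2) * Eg σ t - 1)
      = (Eg σ (x - t) + Eg σ (x + t)) / 2 - Eg σ x
    nlinarith [h]
  have IEhalf : Integrable (fun x : ℝ => (Eg σ (x - t) + Eg σ (x + t)) / 2) :=
    ((IEm.add IEp).div_const 2).congr (Filter.Eventually.of_forall fun _ => rfl)
  have IΨ : Integrable Ψ := by
    refine (IEhalf.sub IE).congr (Filter.Eventually.of_forall fun x => ?_)
    simp only [Pi.sub_apply]
    rw [hΨeq x]
  have intΨ : (∫ x, Ψ x) = 0 := by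
    have s1 : (∫ x : ℝ, Eg σ (x + t)) = ∫ x : ℝ, Eg σ x :=
      integral_add_right_eq_self (μ := volume) (Eg σ) t
    have s2 : (∫ x : ℝ, Eg σ (x - t)) = ∫ x : ℝ, Eg σ x :=
      integral_sub_right_eq_self (μ := volume) (Eg σ) t
    have e : (∫ x, Ψ x) = ∫ x : ℝ, ((Eg σ (x - t) + Eg σ (x + t)) / 2 - Eg σ x) :=
      integral_congr_ae (Filter.Eventually.of_forall fun x => hΨeq x)
    rw [e, integral_sub IEhalf IE, integral_div, integral_add IEm IEp, s1, s2]
    ring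
  -- substitution identities
  have eq1 : (∫ x : ℝ, Eg σ (x + t) * hfun σ σA γ (x ^ 2))
      = ∫ x : ℝ, Eg σ x * hfun σ σA γ ((x - t) ^ 2) := by
    calc (∫ x : ℝ, Eg σ (x + t) * hfun σ σA γ (x ^ 2))
        = ∫ x : ℝ, (fun y => Eg σ y * hfun σ σA γ ((y - t) ^ 2)) (x + t) := by
          refine integral_congr_ae (Filter.Eventually.of_forall fun x => ?_)
          simp only []
          rw [add_sub_cancel_right]
      _ = ∫ x : ℝ, (fun y => Eg σ y * hfun σ σA γ ((y - t) ^ 2)) x :=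
          integral_add_right_eq_self (μ := volume) (fun y => Eg σ y * hfun σ σA γ ((y - t) ^ 2)) t
      _ = ∫ x : ℝ, Eg σ x * hfun σ σA γ ((x - t) ^ 2) := rfl
  have eq2 : (∫ x : ℝ, Eg σ (x - t) * hfun σ σA γ (x ^ 2))
      = ∫ x : ℝ, Eg σ (x + t) * hfun σ σA γ (x ^ 2) := by
    calc (∫ x : ℝ, Eg σ (x - t) * hfun σ σA γ (x ^ 2))
        = ∫ x : ℝ, (fun y => Eg σ (y + t) * hfun σ σA γ (y ^ 2)) (-x) := by
          refine integral_congr_ae (Filter.Eventually.of_forall fun x => ?_)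
          simp only []
          have a1 : Eg σ (-x + t) = Eg σ (x - t) := by
            rw [Eg, Eg]; congr 2; ring
          have a2 : ((-x) ^ 2 : ℝ) = x ^ 2 := by ring
          rw [a1, a2]
      _ = ∫ x : ℝ, (fun y => Eg σ (y + t) * hfun σ σA γ (y ^ 2)) x :=
          integral_neg_eq_self (fun y => Eg σ (y + t) * hfun σ σA γ (y ^ 2)) volume
      _ = ∫ x : ℝ, Eg σ (x + t) * hfun σ σA γ (x ^ 2) := rfl
  -- main identity : ∫ Ψ·W = RHS - LHS
  have Isum : Integrable (fun x : ℝ => Eg σ (x - t) * hfun σ σA γ (x ^ 2) / 2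
      + Eg σ (x + t) * hfun σ σA γ (x ^ 2) / 2) :=
    ((Im.div_const 2).add (Ip.div_const 2)).congr (Filter.Eventually.of_forall fun _ => rfl)
  have Isub : Integrable (fun x : ℝ => Eg σ (x - t) * hfun σ σA γ (x ^ 2) / 2
      + Eg σ (x + t) * hfun σ σA γ (x ^ 2) / 2 - Eg σ x * hfun σ σA γ (x ^ 2)) :=
    (Isum.sub I0).congr (Filter.Eventually.of_forall fun _ => rfl)
  have IΨW : Integrable (fun x => Ψ x * hfun σ σA γ (x ^ 2)) := by
    refine Isub.congr (Filter.Eventually.of_forall fun x => ?_)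
    beta_reduce
    rw [hΨeq x]
    ring
  have main_eq : (∫ x, Ψ x * hfun σ σA γ (x ^ 2))
      = (∫ x : ℝ, Eg σ x * hfun σ σA γ ((x - t) ^ 2))
        - ∫ x : ℝ, Eg σ x * hfun σ σA γ (x ^ 2) := by
    have step : (∫ x, Ψ x * hfun σ σA γ (x ^ 2))
        = ∫ x : ℝ, ((Eg σ (x - t) * hfun σ σA γ (x ^ 2)) / 2
            + (Eg σ (x + t) * hfun σ σA γ (x ^ 2)) / 2
            - Eg σ x * hfun σ σA γ (x ^ 2)) := by
      refine integral_congr_ae (Filter.Eventually.of_forall fun x => ?_)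
      beta_reduce
      rw [hΨeq x]; ring
    rw [step, integral_sub Isum I0,
      integral_add (Im.div_const 2) (Ip.div_const 2), integral_div, integral_div, eq2, eq1]
    ring
  -- pointwise nonnegativity of (W - W x₀) * Ψ
  set c : ℝ := hfun σ σA γ (x₀ ^ 2) with hc
  have hq_nonneg : ∀ x : ℝ, 0 ≤ (hfun σ σA γ (x ^ 2) - c) * Ψ x := by
    intro x
    rcases le_or_gt x₀ |x| with hcase | hcase
    · have h1 : c ≤ hfun σ σA γ (x ^ 2) := by
        rw [hc]
        apply hfun_mono hA hγ
        calc x₀ ^ 2 ≤ |x| ^ 2 := by nlinarith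
          _ = x ^ 2 := sq_abs x
      have hcosh : Real.cosh (x₀ * t / σ ^ 2) ≤ Real.cosh (x * t / σ ^ 2) := by
        rw [Real.cosh_le_cosh]
        calc |x₀ * t / σ ^ 2| ≤ abs (|x| * t / σ ^ 2) := abs_arg_mono hσ hx₀pos.le hcase
          _ = |x * t / σ ^ 2| := by rw [abs_div, abs_div, abs_mul, abs_mul, abs_abs]
      have h2 : 0 ≤ Ψ x := by
        show 0 ≤ Eg σ x * (Real.cosh (x * t / σ ^ 2) * Eg σ t - 1)
        apply mul_nonneg (Eg_pos σ x).le
        have := mul_le_mul_of_nonneg_right hcosh (Eg_pos σ t).le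
        rw [hx₀] at this
        linarith
      exact mul_nonneg (by linarith) h2
    · have h1 : hfun σ σA γ (x ^ 2) ≤ c := by
        rw [hc]
        apply hfun_mono hA hγ
        calc x ^ 2 = |x| ^ 2 := (sq_abs x).symm
          _ ≤ x₀ ^ 2 := by nlinarith [abs_nonneg x]
      have hcosh : Real.cosh (x * t / σ ^ 2) ≤ Real.cosh (x₀ * t / σ ^ 2) := by
        rw [Real.cosh_le_cosh]
        calc |x * t / σ ^ 2| = abs (|x| * t / σ ^ 2) := by
              rw [abs_div, abs_div, abs_mul, abs_mul, abs_abs]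
          _ ≤ |x₀ * t / σ ^ 2| := abs_arg_mono hσ (abs_nonneg x) hcase.le
      have h2 : Ψ x ≤ 0 := by
        show Eg σ x * (Real.cosh (x * t / σ ^ 2) * Eg σ t - 1) ≤ 0
        apply mul_nonpos_of_nonneg_of_nonpos (Eg_pos σ x).le
        have := mul_le_mul_of_nonneg_right hcosh (Eg_pos σ t).le
        rw [hx₀] at this
        linarith
      nlinarith [h1, h2]
  have Iqsub : Integrable (fun x => Ψ x * hfun σ σA γ (x ^ 2) - c * Ψ x) :=
    (IΨW.sub (IΨ.const_mul c)).congr (Filter.Eventually.of_forall fun _ => rfl)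
  have Iq : Integrable (fun x => (hfun σ σA γ (x ^ 2) - c) * Ψ x) := by
    refine Iqsub.congr (Filter.Eventually.of_forall fun x => ?_)
    beta_reduce
    ring
  have int_q_eq : (∫ x, (hfun σ σA γ (x ^ 2) - c) * Ψ x)
      = ∫ x, Ψ x * hfun σ σA γ (x ^ 2) := by
    have : (∫ x, (hfun σ σA γ (x ^ 2) - c) * Ψ x)
        = ∫ x, (Ψ x * hfun σ σA γ (x ^ 2) - c * Ψ x) := by
      refine integral_congr_ae (Filter.Eventually.of_forall fun x => ?_)
      beta_reduce
      ring
    rw [this, integral_sub IΨW (IΨ.const_mul c), integral_const_mul, intΨ]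
    ring
  -- strict positivity of ∫ q via the interval [x₀+1, x₀+2]
  set δ : ℝ := (hfun σ σA γ ((x₀ + 1) ^ 2) - c)
      * (Eg σ (x₀ + 2) * (Real.cosh ((x₀ + 1) * t / σ ^ 2) * Eg σ t - 1)) with hδ
  have hstep : c < hfun σ σA γ ((x₀ + 1) ^ 2) := by
    rw [hc]
    exact hfun_strict hσ hA hγ (sq_nonneg x₀) (by nlinarith)
  have hcoshstep : 1 < Real.cosh ((x₀ + 1) * t / σ ^ 2) * Eg σ t := by
    rw [← hx₀]
    apply mul_lt_mul_of_pos_right ?_ (Eg_pos σ t)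
    exact Real.cosh_lt_cosh.2 (abs_arg_strict hσ hx₀pos.le (by linarith) ht)
  have hδpos : 0 < δ := by
    rw [hδ]
    apply mul_pos (by linarith)
    exact mul_pos (Eg_pos _ _) (by linarith)
  have hlb : ∀ x ∈ Set.Icc (x₀ + 1) (x₀ + 2), δ ≤ (hfun σ σA γ (x ^ 2) - c) * Ψ x := by
    rintro x ⟨hx1, hx2⟩
    have hxpos : 0 < x := by linarith
    have e1 : hfun σ σA γ ((x₀ + 1) ^ 2) ≤ hfun σ σA γ (x ^ 2) :=
      hfun_mono hA hγ (by nlinarith)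
    have e2 : Eg σ (x₀ + 2) ≤ Eg σ x :=
      Eg_anti hσ (by rw [abs_of_pos hxpos, abs_of_pos (by linarith : (0:ℝ) < x₀ + 2)]; linarith)
    have e3 : Real.cosh ((x₀ + 1) * t / σ ^ 2) ≤ Real.cosh (x * t / σ ^ 2) :=
      Real.cosh_le_cosh.2 (abs_arg_mono hσ (by linarith) hx1)
    have e3' : Real.cosh ((x₀ + 1) * t / σ ^ 2) * Eg σ t - 1
        ≤ Real.cosh (x * t / σ ^ 2) * Eg σ t - 1 := by
      have := mul_le_mul_of_nonneg_right e3 (Eg_pos σ t).le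
      linarith
    have hfac : Eg σ (x₀ + 2) * (Real.cosh ((x₀ + 1) * t / σ ^ 2) * Eg σ t - 1)
        ≤ Eg σ x * (Real.cosh (x * t / σ ^ 2) * Eg σ t - 1) :=
      mul_le_mul e2 e3' (by linarith) (Eg_pos _ _).le
    have hfac0 : 0 ≤ Eg σ (x₀ + 2) * (Real.cosh ((x₀ + 1) * t / σ ^ 2) * Eg σ t - 1) :=
      mul_nonneg (Eg_pos _ _).le (by linarith)
    show δ ≤ (hfun σ σA γ (x ^ 2) - c)
      * (Eg σ x * (Real.cosh (x * t / σ ^ 2) * Eg σ t - 1))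
    rw [hδ]
    apply mul_le_mul (by linarith) hfac hfac0 (by linarith)
  have hsub1 : (∫ x in Set.Icc (x₀ + 1) (x₀ + 2), (hfun σ σA γ (x ^ 2) - c) * Ψ x)
      ≤ ∫ x, (hfun σ σA γ (x ^ 2) - c) * Ψ x :=
    setIntegral_le_integral Iq (Filter.Eventually.of_forall hq_nonneg)
  have hvol : (volume (Set.Icc (x₀ + 1) (x₀ + 2))).toReal = 1 := by
    rw [Real.volume_Icc]
    rw [show x₀ + 2 - (x₀ + 1) = 1 by ring]
    simp
  have hsub2 : δ ≤ ∫ x in Set.Icc (x₀ + 1) (x₀ + 2), (hfun σ σA γ (x ^ 2) - c) * Ψ x := by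
    have hconst : (∫ _ in Set.Icc (x₀ + 1) (x₀ + 2), δ) = δ := by
      rw [setIntegral_const, measureReal_def, hvol, one_smul]
    rw [← hconst]
    refine setIntegral_mono_on ?_ Iq.integrableOn measurableSet_Icc hlb
    refine integrableOn_const ?_
    rw [Real.volume_Icc]
    exact ENNReal.ofReal_ne_top
  have : 0 < ∫ x, (hfun σ σA γ (x ^ 2) - c) * Ψ x := lt_of_lt_of_le hδpos
    (le_trans hsub2 hsub1)
  rw [int_q_eq, main_eq] at this
  linarith

/-- Directional bias strictly hurts population utility: with optimal utility
loss `V(d)` depending on a user's preference only through her distance `d`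
from the AI prior mean, the expected population utility loss
`PL(μA) = ∫ V(|μA − θ|) dN(μ, σ²)(θ)` is uniquely minimized at `μA = μ`:
for every `μA ≠ μ`, `PL(μA) > PL(μ)`. -/
theorem directional_bias_population_loss (μ σ σA γ : ℝ) (hσ : 0 < σ) (hA : 0 < σA)
    (hγ : 0 < γ)
    (V : ℝ → ℝ)
    (hV : ∀ d, V d = min (d ^ 2)
      (⨅ σU : Set.Ioi (0 : ℝ),
        (σU : ℝ) ^ 2 * (σA ^ 4 + (σU : ℝ) ^ 2 * d ^ 2) / (σA ^ 2 + (σU : ℝ) ^ 2) ^ 2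
          + γ / 2 * Real.log ((σ ^ 2 + (σU : ℝ) ^ 2) / (σU : ℝ) ^ 2)))
    (PL : ℝ → ℝ)
    (hPL : ∀ μA, PL μA = ∫ θ, V |μA - θ| ∂(gaussianReal μ (Real.toNNReal (σ ^ 2)))) :
    ∀ μA : ℝ, μA ≠ μ → PL μ < PL μA := by
  intro μA hne
  have hVh : ∀ d : ℝ, V d = hfun σ σA γ (d ^ 2) := by
    intro d
    rw [hV d]
    have hiota : (⨅ σU : Set.Ioi (0 : ℝ),
        (σU : ℝ) ^ 2 * (σA ^ 4 + (σU : ℝ) ^ 2 * d ^ 2) / (σA ^ 2 + (σU : ℝ) ^ 2) ^ 2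
          + γ / 2 * Real.log ((σ ^ 2 + (σU : ℝ) ^ 2) / (σU : ℝ) ^ 2))
        = hfun σ σA γ (d ^ 2) := rfl
    rw [hiota, min_eq_right (hfun_le_self hA hγ (sq_nonneg d))]
  have hPL' : ∀ m : ℝ, PL m = (Real.sqrt (2 * Real.pi * σ ^ 2))⁻¹
      * ∫ x, Eg σ x * hfun σ σA γ ((x - (m - μ)) ^ 2) := by
    intro m
    have e : (∫ θ, V |m - θ| ∂(gaussianReal μ (Real.toNNReal (σ ^ 2))))
        = ∫ θ, hfun σ σA γ ((m - θ) ^ 2) ∂(gaussianReal μ (Real.toNNReal (σ ^ 2))) :=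
      integral_congr_ae (Filter.Eventually.of_forall fun θ => by beta_reduce; rw [hVh, sq_abs])
    rw [hPL m, e, PL_repr hσ hA hγ μ m]
  set t : ℝ := μA - μ with hts
  have ht : t ≠ 0 := sub_ne_zero.2 hne
  have hC : 0 < (Real.sqrt (2 * Real.pi * σ ^ 2))⁻¹ := by
    have : 0 < 2 * Real.pi * σ ^ 2 := by positivity
    positivity
  have hzero : (∫ x, Eg σ x * hfun σ σA γ ((x - (μ - μ)) ^ 2))
      = ∫ x : ℝ, Eg σ x * hfun σ σA γ (x ^ 2) := by
    refine integral_congr_ae (Filter.Eventually.of_forall fun x => ?_)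
    beta_reduce
    rw [show x - (μ - μ) = x by ring]
  rw [hPL' μ, hPL' μA, hzero]
  exact mul_lt_mul_of_pos_left (key_ineq hσ hA hγ ht) hC
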